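/- Let K ≥ 2, let c : {1,…,K} → ℝ satisfy c_a > 0 for all a, and let μ : {1,…,K} → ℝ have a unique maximizer a*(μ). Suppose N : {1,…,K} → ℝ with N_a ≥ 0 for all a, and L ≥ 0 are such that for every λ ∈ Alt(μ) one has Σ_{a=1}^K N_a·(μ_a − λ_a)²/2 ≥ L. Then (Σ_{a=1}^K c_a N_a) · ( sup_{w ∈ Σ_K} inf_{λ ∈ Alt(μ)} Σ_{a=1}^K (w_a/c_a)·(μ_a − λ_a)²/2 ) ≥ L. (This is the deterministic core of the cost lower bound of Theorem 1 for unit-variance Gaussian bandits: any vector of expected pull counts satisfying the transportation constraints at level L incurs cumulative cost at least T*(μ)·L, where T*(μ)⁻¹ is the displayed sup-inf.) -/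

import Mathlib

/-- deterministic core of the cost lower bound (Theorem 1) for
unit-variance Gaussian bandits. Any vector of expected pull counts `N`
satisfying the transportation constraints at level `L` incurs cumulative
cost at least `T*(μ) · L`, where `T*(μ)⁻¹` is the sup over the simplex of
the inf over the alternative set of the cost-weighted transportation cost. -/
theorem cost_lower_bound_core
    (K : ℕ) (hK : 2 ≤ K)
    (c μ N : Fin K → ℝ)
    (hc : ∀ a, 0 < c a)
    (astar : Fin K) (hstar : ∀ a, a ≠ astar → μ a < μ astar)
    (hN : ∀ a, 0 ≤ N a)
    (L : ℝ) (hL : 0 ≤ L)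
    (htrans : ∀ lam : Fin K → ℝ, (∃ a, a ≠ astar ∧ lam astar < lam a) →
      L ≤ ∑ a, N a * (μ a - lam a) ^ 2 / 2) :
    L ≤ (∑ a, c a * N a) *
      (⨆ w : {w : Fin K → ℝ // (∀ a, 0 ≤ w a) ∧ ∑ a, w a = 1},
        ⨅ lam : {lam : Fin K → ℝ // ∃ a, a ≠ astar ∧ lam astar < lam a},
          ∑ a, (w.1 a / c a) * (μ a - lam.1 a) ^ 2 / 2) := by
  classical
  haveI : Nontrivial (Fin K) := Fin.nontrivial_iff_two_le.mpr hK
  obtain ⟨b, hb⟩ := exists_ne astar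
  set lam0 : Fin K → ℝ := Function.update μ b (μ astar + 1) with hlam0def
  have hlam0mem : ∃ a, a ≠ astar ∧ lam0 astar < lam0 a := by
    refine ⟨b, hb, ?_⟩
    rw [hlam0def, Function.update_of_ne (Ne.symm hb), Function.update_self]
    linarith
  haveI instL : Nonempty {lam : Fin K → ℝ // ∃ a, a ≠ astar ∧ lam astar < lam a} :=
    ⟨⟨lam0, hlam0mem⟩⟩
  set W := {w : Fin K → ℝ // (∀ a, 0 ≤ w a) ∧ ∑ a, w a = 1}
  set F : W → ℝ := fun w =>
    ⨅ lam : {lam : Fin K → ℝ // ∃ a, a ≠ astar ∧ lam astar < lam a},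
      ∑ a, (w.1 a / c a) * (μ a - lam.1 a) ^ 2 / 2 with hFdef
  have hterm : ∀ (w : W) (lam : Fin K → ℝ) (a : Fin K),
      0 ≤ (w.1 a / c a) * (μ a - lam a) ^ 2 / 2 := by
    intro w lam a
    have := w.2.1 a
    have := (hc a).le
    positivity
  have hbddB : ∀ w : W, BddBelow (Set.range fun lam :
      {lam : Fin K → ℝ // ∃ a, a ≠ astar ∧ lam astar < lam a} =>
      ∑ a, (w.1 a / c a) * (μ a - lam.1 a) ^ 2 / 2) := by
    intro w
    refine ⟨0, ?_⟩
    rintro x ⟨lam, rfl⟩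
    exact Finset.sum_nonneg fun a _ => hterm w lam.1 a
  have hbddA : BddAbove (Set.range F) := by
    refine ⟨∑ a, (1 / c a) * (μ a - lam0 a) ^ 2 / 2, ?_⟩
    rintro x ⟨w, rfl⟩
    have h1 : F w ≤ ∑ a, (w.1 a / c a) * (μ a - lam0 a) ^ 2 / 2 :=
      ciInf_le (hbddB w) ⟨lam0, hlam0mem⟩
    refine h1.trans (Finset.sum_le_sum fun a _ => ?_)
    have hw1 : w.1 a ≤ 1 := by
      have h := Finset.single_le_sum (f := w.1) (fun i _ => w.2.1 i) (Finset.mem_univ a)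
      rw [w.2.2] at h
      exact h
    have h2 : 0 ≤ (μ a - lam0 a) ^ 2 / 2 := by positivity
    have h3 : w.1 a / c a ≤ 1 / c a := by gcongr; exact (hc a).le
    calc (w.1 a / c a) * (μ a - lam0 a) ^ 2 / 2
        = (w.1 a / c a) * ((μ a - lam0 a) ^ 2 / 2) := by ring
      _ ≤ (1 / c a) * ((μ a - lam0 a) ^ 2 / 2) := mul_le_mul_of_nonneg_right h3 h2
      _ = (1 / c a) * (μ a - lam0 a) ^ 2 / 2 := by ring
  set S := ∑ a, c a * N a with hSdef
  rcases eq_or_lt_of_le (Finset.sum_nonneg fun a _ =>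
      mul_nonneg (hc a).le (hN a) : (0:ℝ) ≤ S) with hS0 | hS
  · -- S = 0, so all N a = 0, so L ≤ 0
    have hall : ∀ a ∈ Finset.univ, c a * N a = 0 :=
      (Finset.sum_eq_zero_iff_of_nonneg fun a _ =>
        mul_nonneg (hc a).le (hN a)).mp hS0.symm
    have hNzero : ∀ a, N a = 0 := by
      intro a
      have := hall a (Finset.mem_univ a)
      rcases mul_eq_zero.mp this with h | h
      · exact absurd h (hc a).ne'
      · exact h
    have hLle : L ≤ 0 := by
      have := htrans lam0 hlam0mem
      simpa [hNzero] using this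
    rw [show S = 0 from hS0.symm, zero_mul]
    exact hLle
  · -- S > 0
    set w : Fin K → ℝ := fun a => c a * N a / S with hwdef
    have hwmem : (∀ a, 0 ≤ w a) ∧ ∑ a, w a = 1 := by
      constructor
      · intro a
        exact div_nonneg (mul_nonneg (hc a).le (hN a)) hS.le
      · rw [hwdef, ← Finset.sum_div, ← hSdef, div_self hS.ne']
    have hFw : L / S ≤ F ⟨w, hwmem⟩ := by
      refine le_ciInf fun lam => ?_
      have heq : ∑ a, (w a / c a) * (μ a - lam.1 a) ^ 2 / 2
          = (∑ a, N a * (μ a - lam.1 a) ^ 2 / 2) / S := by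
        rw [Finset.sum_div]
        refine Finset.sum_congr rfl fun a _ => ?_
        rw [hwdef]
        field_simp [(hc a).ne', hS.ne']
      rw [heq]
      exact (div_le_div_iff_of_pos_right hS).mpr (htrans lam.1 lam.2)
    have hsup : L / S ≤ ⨆ w : W, F w :=
      hFw.trans (le_ciSup hbddA ⟨w, hwmem⟩)
    calc L = S * (L / S) := by have hS' : S ≠ 0 := hS.ne'; field_simp
      _ ≤ S * (⨆ w : W, F w) := mul_le_mul_of_nonneg_left hsup hS.le
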